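/- Let V be a finite set with |V| ≥ 4 and A = (a_{ij})_{i,j∈V} a matrix. Suppose there exist v ∈ V and nonzero scalars λ, κ ∈ K such that a_{vj} = λ and a_{jv} = κ for all j ≠ v. Then A is HL-decomposable if and only if A[V\{v}] is decomposable. -/

import Mathlib

/-- `X` is an HL-clan of `A`: both `A[X, V\X]` and `A[V\X, X]` have rank at most 1. -/
def IsHLClan {V K : Type*} [Fintype V] [DecidableEq V] [Field K]
    (A : Matrix V V K) (X : Finset V) : Prop :=
  (A.submatrix (fun i : {a // a ∈ X} => (i : V)) (fun j : {a // a ∈ Xᶜ} => (j : V))).rank ≤ 1 ∧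
  (A.submatrix (fun i : {a // a ∈ Xᶜ} => (i : V)) (fun j : {a // a ∈ X} => (j : V))).rank ≤ 1

/-- `A` is HL-decomposable: it has a nontrivial HL-clan. -/
def HLDecomposable {V K : Type*} [Fintype V] [DecidableEq V] [Field K]
    (A : Matrix V V K) : Prop :=
  ∃ X : Finset V, 2 ≤ X.card ∧ X.card ≤ Fintype.card V - 2 ∧ IsHLClan A X

/-- `I` is a clan of the principal submatrix `A[W]`. -/
def IsClanIn {V K : Type*} [DecidableEq V] (A : Matrix V V K) (W I : Finset V) : Prop :=
  I ⊆ W ∧ ∀ i ∈ I, ∀ j ∈ I, ∀ x ∈ W \ I, A x i = A x j ∧ A i x = A j x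

/-- The principal submatrix `A[W]` is decomposable: it has a nontrivial clan. -/
def DecomposableIn {V K : Type*} [DecidableEq V] (A : Matrix V V K) (W : Finset V) : Prop :=
  ∃ I : Finset V, IsClanIn A W I ∧ I ≠ ∅ ∧ (∀ x, I ≠ {x}) ∧ I ≠ W

/-- In a rank ≤ 1 matrix all 2x2 cross products agree. -/
lemma matrix_cross_of_rank_le_one {m n K : Type*} [Fintype m] [Fintype n] [Field K]
    (M : Matrix m n K) (h : M.rank ≤ 1) (i i' : m) (j j' : n) :
    M i j * M i' j' = M i' j * M i j' := by
  classical
  rw [Matrix.rank] at h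
  obtain ⟨⟨u, hu⟩, hv⟩ := finrank_le_one_iff.mp h
  have colmem : ∀ jj : n, (fun i => M i jj) ∈ LinearMap.range M.mulVecLin := by
    intro jj
    refine ⟨Pi.single jj 1, ?_⟩
    simp [Matrix.mulVecLin_apply, Matrix.mulVec_single]; rfl
  obtain ⟨c, hc⟩ := hv ⟨_, colmem j⟩
  obtain ⟨c', hc'⟩ := hv ⟨_, colmem j'⟩
  have hc1 : ∀ ii, M ii j = c * u ii := by
    intro ii
    have hval := congrFun (congrArg Subtype.val hc) ii
    simpa using hval.symm
  have hc2 : ∀ ii, M ii j' = c' * u ii := by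
    intro ii
    have hval := congrFun (congrArg Subtype.val hc') ii
    simpa using hval.symm
  rw [hc1, hc1, hc2, hc2]; ring

/-- A matrix with all rows equal has rank ≤ 1. -/
lemma matrix_rank_le_one_of_rows_eq {m n K : Type*} [Fintype m] [Fintype n] [Field K]
    (M : Matrix m n K) (h : ∀ i i' j, M i j = M i' j) : M.rank ≤ 1 := by
  classical
  rcases isEmpty_or_nonempty m with hm | hm
  · exact le_trans (Matrix.rank_le_card_height M) (by simp)
  · obtain ⟨i0⟩ := hm
    rw [Matrix.rank]
    have hle : LinearMap.range M.mulVecLin ≤ K ∙ (fun _ => (1 : K) : m → K) := by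
      rintro w ⟨x, rfl⟩
      rw [Submodule.mem_span_singleton]
      refine ⟨∑ j, M i0 j * x j, ?_⟩
      funext i
      simp only [Matrix.mulVecLin_apply, Matrix.mulVec, dotProduct, Pi.smul_apply,
        smul_eq_mul, mul_one]
      exact Finset.sum_congr rfl fun j _ => by rw [h i0 i j]
    have h1 : (fun _ => (1 : K) : m → K) ≠ 0 := by
      intro h0
      have := congrFun h0 i0
      simp at this
    calc Module.finrank K (LinearMap.range M.mulVecLin)
        ≤ Module.finrank K (K ∙ (fun _ => (1 : K) : m → K)) := Submodule.finrank_mono hle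
      _ = 1 := finrank_span_singleton h1

/-- A matrix with all columns equal has rank ≤ 1. -/
lemma matrix_rank_le_one_of_cols_eq {m n K : Type*} [Fintype m] [Fintype n] [Field K]
    (M : Matrix m n K) (h : ∀ i j j', M i j = M i j') : M.rank ≤ 1 := by
  rw [← Matrix.rank_transpose]
  exact matrix_rank_le_one_of_rows_eq M.transpose fun i i' j => h j i i'

theorem hldecomposable_iff_decomposable {V K : Type*} [Fintype V] [DecidableEq V] [Field K]
    (A : Matrix V V K) (hcard : 4 ≤ Fintype.card V) (v : V) (lam kap : K)
    (hlam : lam ≠ 0) (hkap : kap ≠ 0)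
    (hrow : ∀ j, j ≠ v → A v j = lam) (hcol : ∀ j, j ≠ v → A j v = kap) :
    HLDecomposable A ↔ DecomposableIn A ({v}ᶜ) := by
  classical
  have hWcard : ({v}ᶜ : Finset V).card = Fintype.card V - 1 := by
    rw [Finset.card_compl, Finset.card_singleton]
  constructor
  · rintro ⟨X, hX2, hXle, h1, h2⟩
    by_cases hvX : v ∈ X
    · -- use I = Xᶜ
      have hsub : Xᶜ ⊆ ({v}ᶜ : Finset V) := by
        intro w hw
        simp only [Finset.mem_compl, Finset.mem_singleton] at hw ⊢
        intro h; exact hw (h ▸ hvX)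
      have hXccard : Xᶜ.card = Fintype.card V - X.card := by
        rw [Finset.card_compl]
      refine ⟨Xᶜ, ⟨hsub, ?_⟩, ?_, ?_, ?_⟩
      · intro i hi j hj x hx
        rw [Finset.mem_sdiff] at hx
        obtain ⟨hxW, hxXc⟩ := hx
        have hxX : x ∈ X := by simpa using hxXc
        have hine : i ≠ v := by
          intro h; rw [h] at hi; exact (Finset.mem_compl.mp hi) hvX
        have hjne : j ≠ v := by
          intro h; rw [h] at hj; exact (Finset.mem_compl.mp hj) hvX
        constructor
        · have e := matrix_cross_of_rank_le_one _ h1 ⟨x, hxX⟩ ⟨v, hvX⟩ ⟨i, hi⟩ ⟨j, hj⟩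
          simp only [Matrix.submatrix_apply] at e
          rw [hrow i hine, hrow j hjne, mul_comm] at e
          exact mul_left_cancel₀ hlam e
        · have e := matrix_cross_of_rank_le_one _ h2 ⟨i, hi⟩ ⟨j, hj⟩ ⟨x, hxX⟩ ⟨v, hvX⟩
          simp only [Matrix.submatrix_apply] at e
          rw [hcol i hine, hcol j hjne] at e
          have e' : A i x * kap = A j x * kap := by linear_combination e
          exact mul_right_cancel₀ hkap e'
      · intro h
        have := hXccard
        rw [h, Finset.card_empty] at this
        omega
      · intro x h
        have := hXccard
        rw [h, Finset.card_singleton] at this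
        omega
      · intro h
        have := hXccard
        rw [h, hWcard] at this
        have hX2' := hX2
        omega
    · -- use I = X
      have hsub : X ⊆ ({v}ᶜ : Finset V) := by
        intro w hw
        simp only [Finset.mem_compl, Finset.mem_singleton]
        intro h; exact hvX (h ▸ hw)
      have hvXc : v ∈ Xᶜ := Finset.mem_compl.mpr hvX
      refine ⟨X, ⟨hsub, ?_⟩, ?_, ?_, ?_⟩
      · intro i hi j hj x hx
        rw [Finset.mem_sdiff] at hx
        obtain ⟨hxW, hxX⟩ := hx
        have hxXc : x ∈ Xᶜ := Finset.mem_compl.mpr hxX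
        have hine : i ≠ v := by intro h; exact hvX (h ▸ hi)
        have hjne : j ≠ v := by intro h; exact hvX (h ▸ hj)
        constructor
        · have e := matrix_cross_of_rank_le_one _ h2 ⟨x, hxXc⟩ ⟨v, hvXc⟩ ⟨i, hi⟩ ⟨j, hj⟩
          simp only [Matrix.submatrix_apply] at e
          rw [hrow i hine, hrow j hjne, mul_comm] at e
          exact mul_left_cancel₀ hlam e
        · have e := matrix_cross_of_rank_le_one _ h1 ⟨i, hi⟩ ⟨j, hj⟩ ⟨x, hxXc⟩ ⟨v, hvXc⟩
          simp only [Matrix.submatrix_apply] at e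
          rw [hcol i hine, hcol j hjne] at e
          have e' : A i x * kap = A j x * kap := by linear_combination e
          exact mul_right_cancel₀ hkap e'
      · intro h; rw [h, Finset.card_empty] at hX2; omega
      · intro x h; rw [h, Finset.card_singleton] at hX2; omega
      · intro h
        rw [h, hWcard] at hXle
        omega
  · rintro ⟨I, ⟨hIW, hclan⟩, hne, hns, hnW⟩
    have hvI : v ∉ I := by
      intro h
      have := hIW h
      simp at this
    have hI2 : 2 ≤ I.card := by
      by_contra h
      push_neg at h
      interval_cases hh : I.card
      · exact hne (Finset.card_eq_zero.mp hh)
      · obtain ⟨x, hx⟩ := Finset.card_eq_one.mp hh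
        exact hns x hx
    have hIlt : I.card < ({v}ᶜ : Finset V).card :=
      Finset.card_lt_card (lt_of_le_of_ne hIW hnW)
    refine ⟨I, hI2, by omega, ?_, ?_⟩
    · -- rows equal in A[I, Iᶜ]
      apply matrix_rank_le_one_of_rows_eq
      rintro ⟨i, hi⟩ ⟨i', hi'⟩ ⟨x, hx⟩
      simp only [Matrix.submatrix_apply]
      rw [Finset.mem_compl] at hx
      have hine : i ≠ v := by intro h; exact hvI (h ▸ hi)
      have hi'ne : i' ≠ v := by intro h; exact hvI (h ▸ hi')
      by_cases hxv : x = v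
      · rw [hxv, hcol i hine, hcol i' hi'ne]
      · have hxW : x ∈ ({v}ᶜ : Finset V) \ I := by
          rw [Finset.mem_sdiff, Finset.mem_compl, Finset.mem_singleton]
          exact ⟨hxv, hx⟩
        exact (hclan i hi i' hi' x hxW).2
    · -- cols equal in A[Iᶜ, I]
      apply matrix_rank_le_one_of_cols_eq
      rintro ⟨x, hx⟩ ⟨i, hi⟩ ⟨i', hi'⟩
      simp only [Matrix.submatrix_apply]
      rw [Finset.mem_compl] at hx
      have hine : i ≠ v := by intro h; exact hvI (h ▸ hi)
      have hi'ne : i' ≠ v := by intro h; exact hvI (h ▸ hi')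
      by_cases hxv : x = v
      · rw [hxv, hrow i hine, hrow i' hi'ne]
      · have hxW : x ∈ ({v}ᶜ : Finset V) \ I := by
          rw [Finset.mem_sdiff, Finset.mem_compl, Finset.mem_singleton]
          exact ⟨hxv, hx⟩
        exact (hclan i hi i' hi' x hxW).1
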